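/- Let 0 < f_ℓ < 1, and let p^2 = (−1, p^2_ℓ), p^3 = (−1, p^3_ℓ) with p^3_ℓ < p^2_ℓ be points such that the open segment from p^2 to p^3 contains at least two integer points (i.e., there exist at least two integers strictly between p^3_ℓ and p^2_ℓ). Let p^1 be the intersection of the line through p^2 and (0,1) with the line through p^3 and (0,0). Then the triangle with vertices p^1, p^2, p^3 contains (0,0) and (0,1) in the relative interior of its edges p^3 p^1 and p^2 p^1 respectively, and p^1 has positive first coordinate. -/

import Mathlib

/-- Construction of a Type 2 triangle from Section 2.2: the apex `p¹` has positive
first coordinate, and `(0,0)`, `(0,1)` lie in the relative interiors of the edges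
`p³p¹` and `p²p¹` respectively. -/
theorem stmt_16 (fl p2l p3l : ℝ) (hfl0 : 0 < fl) (hfl1 : fl < 1)
    (hlt : p3l < p2l)
    (hints : ∃ a b : ℤ, a ≠ b ∧ p3l < (a : ℝ) ∧ (a : ℝ) < p2l ∧
      p3l < (b : ℝ) ∧ (b : ℝ) < p2l)
    (p1 : ℝ × ℝ)
    (hline2 : p1.2 = 1 + (1 - p2l) * p1.1)
    (hline3 : p1.2 = -p3l * p1.1) :
    0 < p1.1 ∧
    ((0 : ℝ), (0 : ℝ)) ∈ openSegment ℝ ((-1 : ℝ), p3l) p1 ∧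
    ((0 : ℝ), (1 : ℝ)) ∈ openSegment ℝ ((-1 : ℝ), p2l) p1 := by
  obtain ⟨a, b, hab, ha3, ha2, hb3, hb2⟩ := hints
  have hd : 1 < p2l - p3l := by
    rcases lt_or_gt_of_ne hab with h | h
    · have : (a : ℝ) + 1 ≤ b := by exact_mod_cast Int.add_one_le_iff.mpr h
      linarith
    · have : (b : ℝ) + 1 ≤ a := by exact_mod_cast Int.add_one_le_iff.mpr h
      linarith
  have hx : (p2l - p3l - 1) * p1.1 = 1 := by linear_combination hline2 - hline3
  have hxpos : 0 < p1.1 := by nlinarith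
  have h1x : (0 : ℝ) < 1 + p1.1 := by linarith
  refine ⟨hxpos, ⟨p1.1 / (1 + p1.1), 1 / (1 + p1.1), by positivity, by positivity,
      by field_simp; ring, ?_⟩, ⟨p1.1 / (1 + p1.1), 1 / (1 + p1.1), by positivity, by positivity,
      by field_simp; ring, ?_⟩⟩
  · have hy : p1.2 = -p3l * p1.1 := hline3
    refine Prod.ext ?_ ?_ <;> simp [Prod.smul_mk, Prod.fst, Prod.snd]
    · field_simp; ring
    · rw [hy]; field_simp; ring
  · have hy : p1.2 = 1 + (1 - p2l) * p1.1 := hline2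
    refine Prod.ext ?_ ?_ <;> simp [Prod.smul_mk, Prod.fst, Prod.snd]
    · field_simp; ring
    · rw [hy]; field_simp; ring
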